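/- arXiv:0709.3011 — 3 statements merged into one kernel-verified Lean document; each statement's English description precedes it below -/
import Mathlib

section
/- The function B(α) = π · α^(1/(2(α-1))) · α̃^(1/(2(α̃-1))), where α̃ = α/(2α-1), is strictly increasing on (1/2, 1) and strictly decreasing on (1, ∞), with limit 2π as α → 1/2⁺, limit eπ as α → 1, and limit 2π as α → ∞. -/
open Filter

/-- The conjugate index `α̃ = α/(2α-1)`. -/
noncomputable def tildeIdx (α : ℝ) : ℝ := α / (2*α - 1)

/-- `B(α) = π · α^(1/(2(α-1))) · α̃^(1/(2(α̃-1)))`. -/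
noncomputable def Bfun (α : ℝ) : ℝ :=
  Real.pi * α ^ (1/(2*(α-1))) * (tildeIdx α) ^ (1/(2*(tildeIdx α - 1)))

open Set

namespace BfunAux

/-- Auxiliary function `ψ(t) = log t - 2(t-1)/(t+1)`. -/
noncomputable def psi (t : ℝ) : ℝ := Real.log t - 2*(t-1)/(t+1)

lemma hasDerivAt_psi {t : ℝ} (ht : 0 < t) :
    HasDerivAt psi ((t-1)^2/(t*(t+1)^2)) t := by
  have h1 : HasDerivAt (fun x : ℝ => 2*(x-1)) 2 t := by
    simpa using ((hasDerivAt_id t).sub_const 1).const_mul 2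
  have h2 : HasDerivAt (fun x : ℝ => x+1) 1 t := by
    simpa using (hasDerivAt_id t).add_const 1
  have hne : t + 1 ≠ 0 := by linarith
  have h3 := (Real.hasDerivAt_log ht.ne').sub (h1.div h2 hne)
  have h3' : HasDerivAt psi _ t := h3
  convert h3' using 1
  have ht0 : t ≠ 0 := ht.ne'
  field_simp
  ring

lemma psi_neg {t : ℝ} (h0 : 0 < t) (h1 : t < 1) : psi t < 0 := by
  have hmono : StrictMonoOn psi (Ioc (0:ℝ) 1) := by
    apply strictMonoOn_of_deriv_pos (convex_Ioc 0 1)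
    · intro x hx
      exact (hasDerivAt_psi hx.1).continuousAt.continuousWithinAt
    · intro x hx
      rw [interior_Ioc] at hx
      have hx0 := hx.1
      rw [(hasDerivAt_psi hx.1).deriv]
      apply div_pos
      · have : x - 1 ≠ 0 := by intro h; rw [sub_eq_zero] at h; exact hx.2.ne h
        exact lt_of_le_of_ne (sq_nonneg _) (Ne.symm (pow_ne_zero 2 this))
      · positivity
  have := hmono ⟨h0, h1.le⟩ ⟨zero_lt_one, le_refl 1⟩ h1
  simpa [psi] using this

lemma psi_pos {t : ℝ} (h1 : 1 < t) : 0 < psi t := by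
  have hmono : StrictMonoOn psi (Ici (1:ℝ)) := by
    apply strictMonoOn_of_deriv_pos (convex_Ici 1)
    · intro x hx
      exact (hasDerivAt_psi (by linarith [mem_Ici.mp hx] : (0:ℝ) < x)).continuousAt.continuousWithinAt
    · intro x hx
      rw [interior_Ici] at hx
      have hx1 : (1:ℝ) < x := hx
      have hx0 : (0:ℝ) < x := by linarith
      rw [(hasDerivAt_psi hx0).deriv]
      apply div_pos
      · have : x - 1 ≠ 0 := by intro h; rw [sub_eq_zero] at h; linarith [h ▸ hx1]
        exact lt_of_le_of_ne (sq_nonneg _) (Ne.symm (pow_ne_zero 2 this))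
      · positivity
  have := hmono (self_mem_Ici) (mem_Ici.mpr h1.le) h1
  simpa [psi] using this

/-- `F(α) = log B(α)`. -/
noncomputable def Ffun (α : ℝ) : ℝ :=
  Real.log Real.pi - Real.log α + (2*α-1) * Real.log (2*α-1) / (2*(α-1))

lemma Bfun_eq {α : ℝ} (h1 : 1/2 < α) (h2 : α ≠ 1) : Bfun α = Real.exp (Ffun α) := by
  have hα : (0:ℝ) < α := by linarith
  have ht : (0:ℝ) < 2*α - 1 := by linarith
  have hm1 : α - 1 ≠ 0 := sub_ne_zero.mpr h2
  have htil : tildeIdx α = α / (2*α-1) := rfl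
  have htilpos : 0 < tildeIdx α := div_pos hα ht
  have hlogtil : Real.log (tildeIdx α) = Real.log α - Real.log (2*α-1) :=
    Real.log_div hα.ne' ht.ne'
  have htilsub : tildeIdx α - 1 = (1 - α) / (2*α - 1) := by
    have ht' := ht.ne'
    rw [htil]; rw [div_sub_one ht']; ring
  rw [Bfun, Real.rpow_def_of_pos hα, Real.rpow_def_of_pos htilpos, hlogtil, htilsub,
    Ffun]
  rw [← Real.exp_log Real.pi_pos, ← Real.exp_add, ← Real.exp_add]
  congr 1
  have h1a : (1:ℝ) - α ≠ 0 := by intro h; apply h2; linarith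
  have ht' := ht.ne'
  rw [Real.log_exp]
  field_simp
  ring

lemma hasDerivAt_Ffun {α : ℝ} (h1 : 1/2 < α) (h2 : α ≠ 1) :
    HasDerivAt Ffun ((2*(α-1) - α * Real.log (2*α-1)) / (2*α*(α-1)^2)) α := by
  have hα : (0:ℝ) < α := by linarith
  have ht : (0:ℝ) < 2*α - 1 := by linarith
  have hm1 : α - 1 ≠ 0 := sub_ne_zero.mpr h2
  have hu : HasDerivAt (fun x : ℝ => 2*x-1) 2 α := by
    simpa using ((hasDerivAt_id α).const_mul 2).sub_const 1
  have hlu : HasDerivAt (fun x : ℝ => Real.log (2*x-1)) ((2*α-1)⁻¹ * 2) α :=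
    HasDerivAt.comp (h₂ := Real.log) α (Real.hasDerivAt_log ht.ne') hu
  have hN : HasDerivAt (fun x : ℝ => (2*x-1) * Real.log (2*x-1))
      (2 * Real.log (2*α-1) + (2*α-1) * ((2*α-1)⁻¹ * 2)) α := hu.mul hlu
  have hD : HasDerivAt (fun x : ℝ => 2*(x-1)) 2 α := by
    simpa using ((hasDerivAt_id α).sub_const 1).const_mul 2
  have hDne : 2*(α-1) ≠ 0 := by simpa using hm1
  have hQ := hN.div hD hDne
  have hL : HasDerivAt (fun x : ℝ => Real.log Real.pi - Real.log x) (-α⁻¹) α := by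
    simpa using (Real.hasDerivAt_log hα.ne').const_sub (Real.log Real.pi)
  have h := hL.add hQ
  have h' : HasDerivAt Ffun _ α := h
  convert h' using 1
  have ht' := ht.ne'
  have hα' := hα.ne'
  field_simp
  ring

lemma numer_eq {α : ℝ} (hα : α ≠ 0) :
    2*(α-1) - α * Real.log (2*α-1) = -α * psi (2*α-1) := by
  have h2α : (2:ℝ)*α ≠ 0 := by simpa using hα
  rw [psi]
  have : (2*α-1) + 1 = 2*α := by ring
  rw [this]
  field_simp
  ring

lemma denom_pos {α : ℝ} (hα : 0 < α) (h2 : α ≠ 1) : 0 < 2*α*(α-1)^2 := by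
  have hm1 : α - 1 ≠ 0 := sub_ne_zero.mpr h2
  have : 0 < (α-1)^2 := lt_of_le_of_ne (sq_nonneg _) (Ne.symm (pow_ne_zero 2 hm1))
  positivity

lemma Ffun_mono : StrictMonoOn Ffun (Ioo (1/2 : ℝ) 1) := by
  apply strictMonoOn_of_deriv_pos (convex_Ioo _ _)
  · intro x hx
    exact (hasDerivAt_Ffun hx.1 hx.2.ne).continuousAt.continuousWithinAt
  · intro x hx
    rw [interior_Ioo] at hx
    have hx0 : (0:ℝ) < x := by linarith [hx.1]
    rw [(hasDerivAt_Ffun hx.1 hx.2.ne).deriv]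
    apply div_pos _ (denom_pos hx0 hx.2.ne)
    rw [numer_eq hx0.ne']
    have := psi_neg (t := 2*x-1) (by linarith [hx.1]) (by linarith [hx.2])
    nlinarith

lemma Ffun_anti : StrictAntiOn Ffun (Ioi (1 : ℝ)) := by
  apply strictAntiOn_of_deriv_neg (convex_Ioi _)
  · intro x hx
    have hx1 : (1:ℝ) < x := hx
    exact (hasDerivAt_Ffun (by linarith) hx1.ne').continuousAt.continuousWithinAt
  · intro x hx
    rw [interior_Ioi] at hx
    have hx1 : (1:ℝ) < x := hx
    have hx0 : (0:ℝ) < x := by linarith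
    rw [(hasDerivAt_Ffun (by linarith) hx1.ne').deriv]
    apply div_neg_of_neg_of_pos _ (denom_pos hx0 hx1.ne')
    rw [numer_eq hx0.ne']
    have := psi_pos (t := 2*x-1) (by linarith)
    nlinarith

lemma tendsto_2am1_half : Tendsto (fun α : ℝ => 2*α - 1) (nhdsWithin (1/2) (Ioi (1/2))) (nhdsWithin 0 (Ioi 0)) := by
  rw [tendsto_nhdsWithin_iff]
  constructor
  · have : Tendsto (fun α : ℝ => 2*α - 1) (nhds (1/2)) (nhds (2*(1/2) - 1)) :=
      ((continuous_const.mul continuous_id).sub continuous_const).tendsto _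
    norm_num at this
    exact this.mono_left nhdsWithin_le_nhds
  · filter_upwards [self_mem_nhdsWithin] with α (hα : 1/2 < α)
    simp only [mem_Ioi]; linarith

lemma Ffun_lim_half :
    Tendsto Ffun (nhdsWithin (1/2 : ℝ) (Ioi (1/2))) (nhds (Real.log Real.pi + Real.log 2)) := by
  have T1 : Tendsto (fun α : ℝ => Real.log α) (nhdsWithin (1/2) (Ioi (1/2))) (nhds (Real.log (1/2))) :=
    (Real.continuousAt_log (by norm_num)).continuousWithinAt.tendsto
  have T2 : Tendsto (fun α : ℝ => (2*α-1) * Real.log (2*α-1)) (nhdsWithin (1/2) (Ioi (1/2))) (nhds 0) := by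
    have h := tendsto_log_mul_rpow_nhdsGT_zero (r := 1) one_pos
    simp only [Real.rpow_one] at h
    have := h.comp tendsto_2am1_half
    simpa [Function.comp_def, mul_comm] using this
  have T3 : Tendsto (fun α : ℝ => 2*(α-1)) (nhdsWithin (1/2 : ℝ) (Ioi (1/2))) (nhds (-1)) := by
    have : Tendsto (fun α : ℝ => 2*(α-1)) (nhds (1/2 : ℝ)) (nhds (2*((1/2:ℝ)-1))) :=
      (continuous_const.mul (continuous_id.sub continuous_const)).tendsto _
    norm_num at this
    exact this.mono_left nhdsWithin_le_nhds
  have := ((tendsto_const_nhds (x := Real.log Real.pi)).sub T1).add (T2.div T3 (by norm_num))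
  have heq : Real.log Real.pi - Real.log (1/2) + 0 / (-1) = Real.log Real.pi + Real.log 2 := by
    rw [one_div, Real.log_inv]; ring
  rw [heq] at this
  exact this.congr fun α => by simp [Ffun]

lemma Ffun_lim_one :
    Tendsto Ffun (nhdsWithin (1 : ℝ) {x : ℝ | x ≠ 1}) (nhds (Real.log Real.pi + 1)) := by
  have T1 : Tendsto (fun α : ℝ => Real.log α) (nhdsWithin 1 {x : ℝ | x ≠ 1}) (nhds 0) := by
    have := (Real.continuousAt_log (one_ne_zero)).continuousWithinAt
      (s := {x : ℝ | x ≠ 1}).tendsto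
    simpa using this
  have hu : Tendsto (fun α : ℝ => 2*α - 1) (nhdsWithin 1 {x : ℝ | x ≠ 1})
      (nhdsWithin 1 {x : ℝ | x ≠ 1}) := by
    rw [tendsto_nhdsWithin_iff]
    constructor
    · have : Tendsto (fun α : ℝ => 2*α - 1) (nhds 1) (nhds (2*1 - 1)) :=
        ((continuous_const.mul continuous_id).sub continuous_const).tendsto _
      norm_num at this
      exact this.mono_left nhdsWithin_le_nhds
    · filter_upwards [self_mem_nhdsWithin] with α (hα : α ≠ 1)
      show 2*α - 1 ≠ 1
      intro h; apply hα; linarith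
  have hslope : Tendsto (fun v : ℝ => (Real.log v - Real.log 1)/(v - 1))
      (nhdsWithin 1 {x : ℝ | x ≠ 1}) (nhds 1⁻¹) := by
    have := hasDerivAt_iff_tendsto_slope.mp (Real.hasDerivAt_log one_ne_zero)
    have heq : (fun v : ℝ => (Real.log v - Real.log 1)/(v - 1)) = slope Real.log 1 := by
      funext v; rw [slope_def_field]
    rw [heq]
    have h' : Tendsto (slope Real.log 1) (nhdsWithin 1 {1}ᶜ) (nhds 1⁻¹) := by simpa using this
    exact h'
  have hg : Tendsto (fun v : ℝ => v * Real.log v / (v - 1))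
      (nhdsWithin 1 {x : ℝ | x ≠ 1}) (nhds 1) := by
    have hid : Tendsto (fun v : ℝ => v) (nhdsWithin 1 {x : ℝ | x ≠ 1}) (nhds 1) :=
      tendsto_id.mono_left nhdsWithin_le_nhds
    have h2 := hid.mul hslope
    norm_num at h2
    exact h2.congr fun v => (mul_div_assoc _ _ _).symm
  have T2 : Tendsto (fun α : ℝ => (2*α-1) * Real.log (2*α-1) / (2*(α-1)))
      (nhdsWithin 1 {x : ℝ | x ≠ 1}) (nhds 1) := by
    have := hg.comp hu
    refine this.congr fun α => ?_
    simp only [Function.comp]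
    have : 2*(α-1) = 2*α-1 - 1 := by ring
    rw [this]
  have := ((tendsto_const_nhds (x := Real.log Real.pi)).sub T1).add T2
  norm_num at this
  exact this.congr fun α => by simp [Ffun]

lemma tendsto_2am1_atTop : Tendsto (fun α : ℝ => 2*α - 1) atTop atTop := by
  apply tendsto_atTop_add_const_right
  exact tendsto_id.const_mul_atTop two_pos

lemma Ffun_lim_atTop : Tendsto Ffun atTop (nhds (Real.log Real.pi + Real.log 2)) := by
  have hA : Tendsto (fun α : ℝ => Real.log (2*α-1) - Real.log α) atTop (nhds (Real.log 2)) := by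
    have h0 : Tendsto (fun α : ℝ => (2*α-1)/α) atTop (nhds 2) := by
      have : Tendsto (fun α : ℝ => 2 - α⁻¹) atTop (nhds (2 - 0)) :=
        tendsto_const_nhds.sub tendsto_inv_atTop_zero
      norm_num at this
      refine this.congr' ?_
      filter_upwards [eventually_gt_atTop (0:ℝ)] with α hα
      field_simp
    have := ((Real.continuousAt_log two_ne_zero).tendsto).comp h0
    refine this.congr' ?_
    filter_upwards [eventually_gt_atTop (1:ℝ)] with α hα
    simp only [Function.comp]
    rw [Real.log_div (by linarith) (by linarith)]
  have hB : Tendsto (fun α : ℝ => Real.log (2*α-1) / (2*(α-1))) atTop (nhds 0) := by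
    have h1 : Tendsto (fun α : ℝ => Real.log (2*α-1) / (2*α-1)) atTop (nhds 0) := by
      have := (Real.isLittleO_log_id_atTop.tendsto_div_nhds_zero).comp tendsto_2am1_atTop
      simpa [Function.comp_def] using this
    have h2 : Tendsto (fun α : ℝ => (2*α-1)/(2*(α-1))) atTop (nhds 1) := by
      have h3 : Tendsto (fun α : ℝ => 2*(α-1)) atTop atTop := by
        apply Tendsto.const_mul_atTop two_pos
        exact tendsto_atTop_add_const_right _ _ tendsto_id
      have : Tendsto (fun α : ℝ => 1 + (2*(α-1))⁻¹) atTop (nhds (1 + 0)) :=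
        tendsto_const_nhds.add (tendsto_inv_atTop_zero.comp h3)
      norm_num at this
      refine this.congr' ?_
      filter_upwards [eventually_gt_atTop (1:ℝ)] with α hα
      have hm1 : α - 1 ≠ 0 := by intro h; nlinarith
      field_simp
      ring
    have := h1.mul h2
    norm_num at this
    refine this.congr' ?_
    filter_upwards [eventually_gt_atTop (1:ℝ)] with α hα
    have hne : 2*α - 1 ≠ 0 := by intro h; nlinarith
    field_simp
  have := ((tendsto_const_nhds (x := Real.log Real.pi)).add hA).add hB
  norm_num at this
  refine this.congr' ?_
  filter_upwards [eventually_gt_atTop (1:ℝ)] with α hα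
  have hm1 : α - 1 ≠ 0 := by intro h; nlinarith
  rw [Ffun]
  field_simp
  try ring

end BfunAux

open BfunAux in
/-- `B` is strictly increasing on `(1/2,1)`, strictly decreasing on `(1,∞)`,
tends to `2π` as `α → 1/2⁺`, to `eπ` as `α → 1`, and to `2π` as `α → ∞`. -/
theorem Bfun_monotonicity_and_limits :
    StrictMonoOn Bfun (Set.Ioo (1/2 : ℝ) 1) ∧
    StrictAntiOn Bfun (Set.Ioi (1 : ℝ)) ∧
    Tendsto Bfun (nhdsWithin (1/2 : ℝ) (Set.Ioi (1/2 : ℝ))) (nhds (2 * Real.pi)) ∧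
    Tendsto Bfun (nhdsWithin (1 : ℝ) {x : ℝ | x ≠ 1}) (nhds (Real.exp 1 * Real.pi)) ∧
    Tendsto Bfun atTop (nhds (2 * Real.pi)) := by
  have h2pi : Real.exp (Real.log Real.pi + Real.log 2) = 2 * Real.pi := by
    rw [Real.exp_add, Real.exp_log Real.pi_pos, Real.exp_log two_pos]; ring
  have hepi : Real.exp (Real.log Real.pi + 1) = Real.exp 1 * Real.pi := by
    rw [Real.exp_add, Real.exp_log Real.pi_pos]; ring
  refine ⟨?_, ?_, ?_, ?_, ?_⟩
  · intro x hx y hy hxy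
    rw [Bfun_eq hx.1 hx.2.ne, Bfun_eq hy.1 hy.2.ne]
    exact Real.exp_lt_exp.mpr (Ffun_mono hx hy hxy)
  · intro x hx y hy hxy
    have hx1 : (1:ℝ) < x := hx
    have hy1 : (1:ℝ) < y := hy
    rw [Bfun_eq (by linarith) hx1.ne', Bfun_eq (by linarith) hy1.ne']
    exact Real.exp_lt_exp.mpr (Ffun_anti hx hy hxy)
  · have hev : ∀ᶠ α in nhdsWithin (1/2 : ℝ) (Set.Ioi (1/2 : ℝ)),
        Bfun α = Real.exp (Ffun α) := by
      have hlt1 : ∀ᶠ α in nhdsWithin (1/2 : ℝ) (Set.Ioi (1/2 : ℝ)), α < 1 := by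
        apply eventually_nhdsWithin_of_eventually_nhds
        exact eventually_lt_nhds (by norm_num)
      filter_upwards [self_mem_nhdsWithin, hlt1] with α (h1 : 1/2 < α) h2
      exact Bfun_eq h1 (ne_of_lt h2)
    have h := (Real.continuous_exp.tendsto _).comp Ffun_lim_half
    rw [h2pi] at h
    exact h.congr' (hev.mono fun α ha => ha.symm)
  · have hev : ∀ᶠ α in nhdsWithin (1 : ℝ) {x : ℝ | x ≠ 1},
        Bfun α = Real.exp (Ffun α) := by
      have hgt : ∀ᶠ α in nhdsWithin (1 : ℝ) {x : ℝ | x ≠ 1}, 1/2 < α := by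
        apply eventually_nhdsWithin_of_eventually_nhds
        exact eventually_gt_nhds (by norm_num)
      filter_upwards [self_mem_nhdsWithin, hgt] with α (h1 : α ≠ 1) h2
      exact Bfun_eq h2 h1
    have h := (Real.continuous_exp.tendsto _).comp Ffun_lim_one
    rw [hepi] at h
    exact h.congr' (hev.mono fun α ha => ha.symm)
  · have hev : ∀ᶠ α in atTop, Bfun α = Real.exp (Ffun α) := by
      filter_upwards [eventually_gt_atTop (1:ℝ)] with α hα
      exact Bfun_eq (by linarith) hα.ne'
    have h := (Real.continuous_exp.tendsto _).comp Ffun_lim_atTop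
    rw [h2pi] at h
    exact h.congr' (hev.mono fun α ha => ha.symm)
end

section
/- For the one-dimensional Student-t wavefunction Ψ_ν(x) = C_ν (1 + x²)^{-(1+ν)/4} with normalization C_ν = (Γ((1+ν)/2)/(√π Γ(ν/2)))^{1/2}, the Rényi α-entropy power of the density |Ψ_ν|² equals N_α = √π · (Γ^α((1+ν)/2) / Γ(α(1+ν)/2))^{1/(1-α)} · (Γ((α(1+ν)-1)/2) / Γ^α(ν/2))^{1/(1-α)}, valid for α ≠ 1 and ν > max(0, (1-α)/α). -/
open MeasureTheory Real Set

lemma stu_integrableOn (s : ℝ) (hs : 1/2 < s) (x : ℝ) :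
    IntegrableOn (fun t : ℝ => t ^ (s - 1) * Real.exp (-(1 + x ^ 2) * t)) (Ioi 0) := by
  have hb : (0:ℝ) < 1 + x ^ 2 := by positivity
  have := integrableOn_rpow_mul_exp_neg_mul_rpow (p := 1) (s := s - 1) (b := 1 + x ^ 2)
    (by linarith) one_pos hb
  refine this.congr_fun (fun t ht => ?_) measurableSet_Ioi
  simp only [Real.rpow_one]

lemma stu_eval (s : ℝ) (hs : 1/2 < s) (x : ℝ) :
    ∫ t in Ioi (0:ℝ), t ^ (s - 1) * Real.exp (-(1 + x ^ 2) * t)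
      = (1 + x ^ 2) ^ (-s) * Real.Gamma s := by
  have hb : (0:ℝ) < 1 + x ^ 2 := by positivity
  have h := integral_rpow_mul_exp_neg_mul_rpow (p := 1) (q := s - 1) (b := 1 + x ^ 2)
    one_pos (by linarith) hb
  have h2 : ∫ t in Ioi (0:ℝ), t ^ (s - 1) * Real.exp (-(1 + x ^ 2) * t)
      = ∫ t in Ioi (0:ℝ), t ^ (s - 1) * Real.exp (-(1 + x ^ 2) * t ^ (1:ℝ)) := by
    refine setIntegral_congr_fun measurableSet_Ioi (fun t ht => ?_)
    rw [Real.rpow_one]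
  rw [h2, h, show -(s - 1 + 1)/1 = -s by ring, show (s - 1 + 1)/1 = s by ring]
  ring

lemma stu_integrable (s : ℝ) (hs : 1/2 < s) :
    Integrable (fun x : ℝ => (1 + x ^ 2) ^ (-s)) := by
  have h1 : ((Module.finrank ℝ ℝ : ℝ)) < 2 * s := by
    simp only [Module.finrank_self, Nat.cast_one]; linarith
  have h := integrable_rpow_neg_one_add_norm_sq (E := ℝ) (μ := volume) (r := 2 * s) h1
  have he : (fun x : ℝ => ((1:ℝ) + ‖x‖ ^ 2) ^ (-(2*s)/2)) = fun x : ℝ => (1 + x ^ 2) ^ (-s) := by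
    funext x
    rw [Real.norm_eq_abs, sq_abs, show -(2*s)/2 = -s by ring]
  rwa [he] at h

lemma stu_key (s : ℝ) (hs : 1/2 < s) :
    ∫ x : ℝ, (1 + x ^ 2) ^ (-s) = Real.sqrt π * Real.Gamma (s - 1/2) / Real.Gamma s := by
  have hs0 : 0 < s := by linarith
  have hΓs : 0 < Real.Gamma s := Real.Gamma_pos_of_pos hs0
  set f : ℝ → ℝ → ℝ := fun x t => t ^ (s - 1) * Real.exp (-(1 + x ^ 2) * t) with hf
  have hmeas : AEStronglyMeasurable (Function.uncurry f)
      ((volume : Measure ℝ).prod ((volume : Measure ℝ).restrict (Ioi 0))) := by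
    apply Measurable.aestronglyMeasurable
    fun_prop
  have hint : Integrable (Function.uncurry f)
      ((volume : Measure ℝ).prod ((volume : Measure ℝ).restrict (Ioi 0))) := by
    rw [integrable_prod_iff hmeas]
    constructor
    · exact Filter.Eventually.of_forall (fun x => stu_integrableOn s hs x)
    · have he : (fun x : ℝ => ∫ t in Ioi (0:ℝ), ‖f x t‖)
          = fun x : ℝ => (1 + x ^ 2) ^ (-s) * Real.Gamma s := by
        funext x
        have : ∫ t in Ioi (0:ℝ), ‖f x t‖ = ∫ t in Ioi (0:ℝ), f x t := by
          refine setIntegral_congr_fun measurableSet_Ioi (fun t ht => ?_)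
          have ht0 : (0:ℝ) < t := ht
          have : 0 ≤ f x t := by
            apply mul_nonneg (Real.rpow_nonneg ht0.le _) (Real.exp_nonneg _)
          exact norm_of_nonneg this
        rw [this, stu_eval s hs x]
      simp only [Function.uncurry_apply_pair]
      rw [he]
      exact (stu_integrable s hs).mul_const _
  have hswap := MeasureTheory.integral_integral_swap hint
  -- hswap : ∫ x, ∫ t in Ioi 0, f x t = ∫ t in Ioi 0, ∫ x, f x t
  have hleft : ∫ x : ℝ, ∫ t in Ioi (0:ℝ), f x t = (∫ x : ℝ, (1 + x ^ 2) ^ (-s)) * Real.Gamma s := by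
    rw [show (fun x : ℝ => ∫ t in Ioi (0:ℝ), f x t) = fun x : ℝ => (1 + x ^ 2) ^ (-s) * Real.Gamma s
        from funext (fun x => stu_eval s hs x)]
    rw [integral_mul_const]
  have hgauss : ∀ t ∈ Ioi (0:ℝ), ∫ x : ℝ, f x t
      = Real.sqrt π * (Real.exp (-t) * t ^ (s - 1/2 - 1)) := by
    intro t ht
    have ht0 : (0:ℝ) < t := ht
    have h1 : ∀ x : ℝ, f x t = (t ^ (s-1) * Real.exp (-t)) * Real.exp (-t * x ^ 2) := by
      intro x
      rw [hf]
      simp only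
      rw [show -(1 + x ^ 2) * t = -t + -t * x ^ 2 by ring, Real.exp_add]
      ring
    rw [show (fun x : ℝ => f x t) = fun x => (t ^ (s-1) * Real.exp (-t)) * Real.exp (-t * x ^ 2)
        from funext h1]
    rw [integral_const_mul, integral_gaussian]
    rw [show π / t = π * t⁻¹ by ring, Real.sqrt_mul Real.pi_nonneg,
      Real.sqrt_inv, Real.sqrt_eq_rpow t, ← Real.rpow_neg_one (t ^ (1/(2:ℝ))),
      ← Real.rpow_mul ht0.le]
    rw [show s - 1/2 - 1 = (s - 1) + (1/2 * -1) by ring, Real.rpow_add ht0]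
    ring
  have hright : ∫ t in Ioi (0:ℝ), ∫ x : ℝ, f x t
      = Real.sqrt π * Real.Gamma (s - 1/2) := by
    rw [setIntegral_congr_fun measurableSet_Ioi hgauss, integral_const_mul,
      ← Real.Gamma_eq_integral (by linarith : 0 < s - 1/2)]
  have : (∫ x : ℝ, (1 + x ^ 2) ^ (-s)) * Real.Gamma s = Real.sqrt π * Real.Gamma (s - 1/2) := by
    rw [← hleft, hswap, hright]
  field_simp at this ⊢
  linarith [this]

/-- Rényi `α`-entropy power of the density `|Ψ_ν|²` of the one-dimensional
Student-t wavefunction, expressed through Gamma functions. -/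
theorem student_t_entropy_power (ν α : ℝ) (hα : 0 < α) (hα1 : α ≠ 1)
    (hν : max 0 ((1 - α)/α) < ν)
    (Ψ : ℝ → ℝ)
    (hΨ : Ψ = fun x => Real.sqrt (Real.Gamma ((1+ν)/2) / (Real.sqrt π * Real.Gamma (ν/2)))
      * (1 + x ^ 2) ^ (-((1+ν)/4))) :
    (∫ x, |Ψ x| ^ (2 * α)) ^ (1/(1-α)) =
      Real.sqrt π * (Real.Gamma ((1+ν)/2) ^ α / Real.Gamma (α * (1+ν)/2)) ^ (1/(1-α))
        * (Real.Gamma ((α * (1+ν) - 1)/2) / Real.Gamma (ν/2) ^ α) ^ (1/(1-α)) := by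
  have hν0 : 0 < ν := lt_of_le_of_lt (le_max_left _ _) hν
  have hν1 : (1 - α)/α < ν := lt_of_le_of_lt (le_max_right _ _) hν
  have hs : 1/2 < α * (1 + ν) / 2 := by
    have : 1 - α < ν * α := (div_lt_iff₀ hα).mp hν1
    nlinarith
  have h1α : (1:ℝ) - α ≠ 0 := sub_ne_zero.mpr (Ne.symm hα1)
  set s : ℝ := α * (1 + ν) / 2 with hsdef
  have hsm : (α * (1+ν) - 1)/2 = s - 1/2 := by rw [hsdef]; ring
  rw [hsm]
  have hpi : (0:ℝ) < Real.sqrt π := Real.sqrt_pos.mpr Real.pi_pos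
  have hG1 : 0 < Real.Gamma ((1+ν)/2) := Real.Gamma_pos_of_pos (by linarith)
  have hG0 : 0 < Real.Gamma (ν/2) := Real.Gamma_pos_of_pos (by linarith)
  have hΓ1 : 0 < Real.Gamma s := Real.Gamma_pos_of_pos (by linarith)
  have hΓ2 : 0 < Real.Gamma (s - 1/2) := Real.Gamma_pos_of_pos (by linarith)
  set C : ℝ := Real.sqrt (Real.Gamma ((1+ν)/2) / (Real.sqrt π * Real.Gamma (ν/2))) with hC
  have hC0 : 0 ≤ C := Real.sqrt_nonneg _
  have hCsq : C ^ (2:ℝ) = Real.Gamma ((1+ν)/2) / (Real.sqrt π * Real.Gamma (ν/2)) := by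
    rw [Real.rpow_two, hC, Real.sq_sqrt (by positivity)]
  have hfun : (fun x : ℝ => |Ψ x| ^ (2 * α))
      = fun x : ℝ => C ^ ((2:ℝ) * α) * (1 + x ^ 2) ^ (-s) := by
    funext x
    have hb : (0:ℝ) < 1 + x ^ 2 := by positivity
    have hB : (0:ℝ) ≤ (1 + x ^ 2) ^ (-((1+ν)/4)) := Real.rpow_nonneg hb.le _
    rw [hΨ]
    simp only [← hC]
    rw [abs_of_nonneg (mul_nonneg hC0 hB), Real.mul_rpow hC0 hB,
      ← Real.rpow_mul hb.le, show -((1+ν)/4) * (2 * α) = -s by rw [hsdef]; ring]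
  have hIeq : (∫ x, |Ψ x| ^ (2 * α))
      = C ^ ((2:ℝ) * α) * (Real.sqrt π * Real.Gamma (s - 1/2) / Real.Gamma s) := by
    rw [hfun, integral_const_mul, stu_key s hs]
  have hCα : C ^ ((2:ℝ) * α) = (Real.Gamma ((1+ν)/2) / (Real.sqrt π * Real.Gamma (ν/2))) ^ α := by
    rw [Real.rpow_mul hC0, hCsq]
  have hI2 : (∫ x, |Ψ x| ^ (2 * α)) = Real.sqrt π ^ ((1:ℝ) - α)
      * ((Real.Gamma ((1+ν)/2) ^ α / Real.Gamma s)
        * (Real.Gamma (s - 1/2) / Real.Gamma (ν/2) ^ α)) := by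
    rw [hIeq, hCα, Real.div_rpow hG1.le (by positivity), Real.mul_rpow hpi.le hG0.le,
      Real.rpow_sub hpi, Real.rpow_one]
    have h1 : Real.sqrt π ^ α ≠ 0 := ne_of_gt (Real.rpow_pos_of_pos hpi _)
    have h2 : Real.Gamma (ν/2) ^ α ≠ 0 := ne_of_gt (Real.rpow_pos_of_pos hG0 _)
    field_simp
  rw [hI2, Real.mul_rpow (by positivity) (by positivity),
    ← Real.rpow_mul hpi.le, mul_one_div, div_self h1α, Real.rpow_one,
    Real.mul_rpow (by positivity) (by positivity), mul_assoc]
end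

section
/- For the normalized exponential (Laplace-type) wavefunction Ψ_E(x) = e^{-|x|} on ℝ (with density |Ψ_E(x)|² = e^{-2|x|}·(normalization)), one has N_2(E)·N_2(Ẽ) = 8π/5, which is strictly less than the Gaussian value N_2(G)·N_2(G̃) = 2π. -/
open MeasureTheory

section Aux
open Filter Set Real

lemma exp_neg_abs_le (x : ℝ) : Real.exp (-|x|) ≤ 4 * ((1 + x^2)⁻¹) := by
  have h0 : (0:ℝ) < 1 + x^2 := by positivity
  rw [Real.exp_neg]
  have h1 : 1 + |x|/2 ≤ Real.exp (|x|/2) := by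
    have := Real.add_one_le_exp (|x|/2); linarith
  have h2 : (1 + |x|/2)^2 ≤ (Real.exp (|x|/2))^2 :=
    pow_le_pow_left₀ (by positivity) h1 2
  have h3 : (Real.exp (|x|/2))^2 = Real.exp |x| := by
    rw [sq, ← Real.exp_add]; ring_nf
  have h4 : (1 + x^2)/4 ≤ Real.exp |x| := by
    rw [← h3]; nlinarith [sq_abs x, abs_nonneg x]
  rw [inv_le_comm₀ (Real.exp_pos _) (by positivity)]
  rw [mul_inv, inv_inv]
  calc (4:ℝ)⁻¹ * (1+x^2) = (1+x^2)/4 := by ring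
  _ ≤ _ := h4

lemma integrable_exp_neg_abs : Integrable (fun x : ℝ => Real.exp (-|x|)) := by
  apply Integrable.mono' ((integrable_inv_one_add_sq).const_mul 4)
  · exact (Real.continuous_exp.comp continuous_abs.neg).aestronglyMeasurable
  · refine ae_of_all _ fun x => ?_
    rw [Real.norm_eq_abs, abs_of_pos (Real.exp_pos _)]
    exact exp_neg_abs_le x

lemma int_cexp (a : ℂ) (ha : 0 < a.re) :
    ∫ x in Ioi (0:ℝ), Complex.exp (-(a * x)) = a⁻¹ := by
  have hane : a ≠ 0 := fun h => by simp [h] at ha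
  have hderiv : ∀ x ∈ Ici (0:ℝ),
      HasDerivAt (fun x : ℝ => -a⁻¹ * Complex.exp (-(a * x))) (Complex.exp (-(a * x))) x := by
    intro x _
    have h1 : HasDerivAt (fun x : ℝ => -(a * (x:ℂ))) (-a) x := by
      refine (((Complex.ofRealCLM.hasDerivAt (x := x)).const_mul a).neg).congr_deriv ?_
      simp
    have h2 := h1.cexp
    have h3 := h2.const_mul (-a⁻¹)
    refine h3.congr_deriv ?_
    field_simp
  have hint : IntegrableOn (fun x : ℝ => Complex.exp (-(a * x))) (Ioi 0) := by
    apply Integrable.mono' ((exp_neg_integrableOn_Ioi 0 ha))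
    · exact (Complex.continuous_exp.comp (by continuity)).aestronglyMeasurable
    · refine ae_of_all _ fun x => le_of_eq ?_
      rw [Complex.norm_exp]
      norm_num
  have htend : Tendsto (fun x : ℝ => -a⁻¹ * Complex.exp (-(a * x))) atTop (nhds 0) := by
    rw [tendsto_zero_iff_norm_tendsto_zero]
    have : (fun x : ℝ => ‖-a⁻¹ * Complex.exp (-(a * x))‖)
        = fun x : ℝ => ‖a⁻¹‖ * Real.exp (-(a.re * x)) := by
      ext x
      rw [norm_mul, norm_neg, Complex.norm_exp]
      norm_num
    rw [this]
    rw [show (0:ℝ) = ‖a⁻¹‖ * 0 by ring]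
    apply Tendsto.const_mul
    apply Real.tendsto_exp_atBot.comp
    simpa using (tendsto_id (α := ℝ) (x := atTop)).const_mul_atTop_of_neg (neg_neg_iff_pos.mpr ha)
  have := integral_Ioi_of_hasDerivAt_of_tendsto' hderiv hint htend
  rw [this]
  simp

lemma fourier_val (ξ : ℝ) :
    ∫ x : ℝ, Complex.exp (-(Complex.I * (x:ℂ) * (ξ:ℂ))) * ((Real.exp (-|x|) : ℝ) : ℂ)
      = ((2 / (1 + ξ^2) : ℝ) : ℂ) := by
  set h : ℝ → ℂ := fun x => Complex.exp (-(Complex.I * (x:ℂ) * (ξ:ℂ))) * ((Real.exp (-|x|) : ℝ) : ℂ) with hh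
  have hnorm : ∀ x, ‖h x‖ = Real.exp (-|x|) := by
    intro x
    rw [hh]
    simp only [norm_mul, Complex.norm_exp, Complex.norm_real, Real.norm_eq_abs]
    have : (-(Complex.I * (x:ℂ) * (ξ:ℂ))).re = 0 := by simp
    rw [this, Real.exp_zero, abs_of_pos (Real.exp_pos _), one_mul]
  have hint : Integrable h := by
    apply Integrable.mono' integrable_exp_neg_abs
    · apply Continuous.aestronglyMeasurable; rw [hh]; continuity
    · exact ae_of_all _ fun x => le_of_eq (hnorm x)
  rw [← intervalIntegral.integral_Iic_add_Ioi (b := (0:ℝ)) hint.integrableOn hint.integrableOn]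
  have hIic : ∫ x in Iic (0:ℝ), h x = ∫ x in Ioi (0:ℝ), h (-x) := by
    rw [integral_comp_neg_Ioi, neg_zero]
  have hIoi : ∫ x in Ioi (0:ℝ), h x
      = ∫ x in Ioi (0:ℝ), Complex.exp (-((1 + Complex.I * ξ) * x)) := by
    apply setIntegral_congr_fun measurableSet_Ioi
    intro x hx
    rw [hh]
    simp only
    rw [abs_of_pos hx, Complex.ofReal_exp, ← Complex.exp_add]
    congr 1
    push_cast
    ring
  have hIic2 : ∫ x in Ioi (0:ℝ), h (-x)
      = ∫ x in Ioi (0:ℝ), Complex.exp (-((1 - Complex.I * ξ) * x)) := by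
    apply setIntegral_congr_fun measurableSet_Ioi
    intro x hx
    rw [hh]
    simp only [abs_neg]
    rw [abs_of_pos hx, Complex.ofReal_exp, ← Complex.exp_add]
    congr 1
    push_cast
    ring
  rw [hIic, hIic2, hIoi, int_cexp _ (by simp), int_cexp _ (by simp)]
  have hz : ((1:ℂ) + (ξ:ℂ)^2) ≠ 0 := by
    have : ((1:ℂ) + (ξ:ℂ)^2) = ((1 + ξ^2 : ℝ) : ℂ) := by push_cast; ring
    rw [this]
    exact_mod_cast (by positivity : (1 + ξ^2 : ℝ) ≠ 0)
  have h1 : (1 - Complex.I * ξ) ≠ 0 := by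
    intro hc
    have := congrArg Complex.re hc; simp at this
  have h2 : (1 + Complex.I * ξ) ≠ 0 := by
    intro hc
    have := congrArg Complex.re hc; simp at this
  push_cast
  field_simp
  ring_nf
  rw [Complex.I_sq]
  ring

lemma integral_exp_neg_four_abs : ∫ x : ℝ, Real.exp (-(4 * |x|)) = 1/2 := by
  have hint : Integrable (fun x : ℝ => Real.exp (-(4 * |x|))) := by
    apply Integrable.mono' integrable_exp_neg_abs
    · exact (Real.continuous_exp.comp (by continuity)).aestronglyMeasurable
    · refine ae_of_all _ fun x => ?_
      rw [Real.norm_eq_abs, abs_of_pos (Real.exp_pos _)]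
      apply Real.exp_le_exp.mpr
      have := abs_nonneg x; linarith
  rw [← intervalIntegral.integral_Iic_add_Ioi (b := (0:ℝ)) hint.integrableOn hint.integrableOn]
  have hIic : ∫ x in Iic (0:ℝ), Real.exp (-(4*|x|)) = ∫ x in Ioi (0:ℝ), Real.exp (-(4*|x|)) := by
    rw [show Iic (0:ℝ) = Iic (-0) by norm_num, ← integral_comp_neg_Ioi]
    simp
  have hIoi : ∫ x in Ioi (0:ℝ), Real.exp (-(4*|x|)) = 1/4 := by
    have hcong : ∫ x in Ioi (0:ℝ), Real.exp (-(4*|x|)) = ∫ x in Ioi (0:ℝ), Real.exp (-4*x) := by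
      apply setIntegral_congr_fun measurableSet_Ioi
      intro x hx
      simp only []; rw [abs_of_pos hx]; ring_nf
    rw [hcong]
    have hderiv : ∀ x ∈ Ici (0:ℝ),
        HasDerivAt (fun x : ℝ => -Real.exp (-4*x)/4) (Real.exp (-4*x)) x := by
      intro x _
      have h1 : HasDerivAt (fun x : ℝ => -4*x) (-4) x := by
        simpa using (hasDerivAt_id x).const_mul (-4)
      have := (h1.exp.neg).div_const 4
      refine this.congr_deriv ?_
      ring
    have htend : Tendsto (fun x : ℝ => -Real.exp (-4*x)/4) atTop (nhds 0) := by
      rw [show (0:ℝ) = -0/4 by norm_num]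
      apply Tendsto.div_const
      apply Tendsto.neg
      apply Real.tendsto_exp_atBot.comp
      exact (tendsto_id (α := ℝ) (x := atTop)).const_mul_atTop_of_neg (by norm_num)
    rw [integral_Ioi_of_hasDerivAt_of_tendsto' hderiv (exp_neg_integrableOn_Ioi 0 (by norm_num)) htend]
    norm_num
  rw [hIic, hIoi]; norm_num

noncomputable def G (x : ℝ) : ℝ :=
  x/(6*(1+x^2)^3) + 5*x/(24*(1+x^2)^2) + 5*x/(16*(1+x^2)) + 5/16 * Real.arctan x

lemma G_deriv (x : ℝ) : HasDerivAt G (((1+x^2)^4)⁻¹) x := by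
  have h0 : (1 + x^2) ≠ 0 := by positivity
  have hd : HasDerivAt (fun x : ℝ => 1 + x^2) (2*x) x := by
    simpa using ((hasDerivAt_pow 2 x).const_add 1)
  have h1 : HasDerivAt (fun x : ℝ => x/(6*(1+x^2)^3))
      ((1*(6*(1+x^2)^3) - x*(6*(3*(1+x^2)^2*(2*x))))/(6*(1+x^2)^3)^2) x := by
    exact (hasDerivAt_id x).div (((hd.pow 3).const_mul 6)) (by positivity)
  have h2 := (((hasDerivAt_id x).const_mul 5).div (((hd.pow 2).const_mul 24)) (by simp only [Pi.pow_apply]; positivity))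
  have h3 := (((hasDerivAt_id x).const_mul 5).div ((hd.const_mul 16)) (by positivity))
  have h4 : HasDerivAt (fun x : ℝ => 5/16 * Real.arctan x) (5/16 * (1/(1+x^2))) x :=
    (Real.hasDerivAt_arctan x).const_mul (5/16)
  have := ((h1.add h2).add h3).add h4
  refine this.congr_deriv ?_
  simp only [Pi.pow_apply, id]
  norm_num
  field_simp
  ring

lemma tendsto_G : Tendsto G atTop (nhds (5*π/32)) := by
  have key : ∀ c : ℝ, 0 < c → ∀ k : ℕ, 1 ≤ k →
      Tendsto (fun x : ℝ => x/(c*(1+x^2)^k)) atTop (nhds 0) := by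
    intro c hc k hk
    have : (fun x : ℝ => x/(c*(1+x^2)^k)) = fun x => (c*(1+x^2)^k/x)⁻¹ := by
      ext x; rw [inv_div]
    rw [this]
    apply Tendsto.inv_tendsto_atTop
    apply tendsto_atTop_mono' _ _ (tendsto_id.const_mul_atTop hc)
    filter_upwards [eventually_ge_atTop (1:ℝ)] with x hx
    have hx0 : 0 < x := by linarith
    rw [le_div_iff₀ hx0]
    have h1 : (1:ℝ)+x^2 ≤ (1+x^2)^k := le_self_pow₀ (by nlinarith) (by omega)
    have h2 : x * x ≤ 1 + x^2 := by nlinarith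
    calc c * id x * x = c * (x * x) := by simp [id]; ring
    _ ≤ c * (1+x^2) := by nlinarith
    _ ≤ c * (1+x^2)^k := by nlinarith
  have t1 := key 6 (by norm_num) 3 (by norm_num)
  have t2' := key 24 (by norm_num) 2 (by norm_num)
  have t2 : Tendsto (fun x : ℝ => 5*x/(24*(1+x^2)^2)) atTop (nhds 0) := by
    have := t2'.const_mul 5
    simpa [mul_div_assoc] using this
  have t3' := key 16 (by norm_num) 1 (by norm_num)
  have t3 : Tendsto (fun x : ℝ => 5*x/(16*(1+x^2))) atTop (nhds 0) := by
    have := t3'.const_mul 5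
    simp only [pow_one] at this
    simpa [mul_div_assoc] using this
  have t4 : Tendsto (fun x : ℝ => 5/16 * Real.arctan x) atTop (nhds (5/16 * (π/2))) :=
    (tendsto_nhds_of_tendsto_nhdsWithin Real.tendsto_arctan_atTop).const_mul (5/16)
  have := ((t1.add t2).add t3).add t4
  unfold G
  convert this using 2
  ring
lemma integrable_inv_pow4 : Integrable (fun x : ℝ => ((1+x^2)^4)⁻¹) := by
  apply Integrable.mono' integrable_inv_one_add_sq
  · exact (((continuous_const.add (continuous_pow 2)).pow 4).inv₀ (fun x => by simp only [Pi.pow_apply, Pi.add_apply]; positivity)).aestronglyMeasurable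
  · refine ae_of_all _ fun x => ?_
    have h0 : (0:ℝ) < 1 + x^2 := by positivity
    rw [Real.norm_eq_abs, abs_of_pos (by positivity)]
    apply inv_anti₀ h0
    exact le_self_pow₀ (by nlinarith) (by norm_num)

lemma integral_inv_pow4 : ∫ x : ℝ, ((1+x^2)^4)⁻¹ = 5*π/16 := by
  rw [← intervalIntegral.integral_Iic_add_Ioi (b := (0:ℝ)) integrable_inv_pow4.integrableOn
    integrable_inv_pow4.integrableOn]
  have hIoi : ∫ x in Ioi (0:ℝ), ((1+x^2)^4)⁻¹ = 5*π/32 := by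
    rw [integral_Ioi_of_hasDerivAt_of_tendsto' (fun x _ => G_deriv x)
      integrable_inv_pow4.integrableOn tendsto_G]
    unfold G
    norm_num
  have hIic : ∫ x in Iic (0:ℝ), ((1+x^2)^4)⁻¹ = ∫ x in Ioi (0:ℝ), ((1+x^2)^4)⁻¹ := by
    rw [show Iic (0:ℝ) = Iic (-0) by norm_num, ← integral_comp_neg_Ioi]
    simp
  rw [hIic, hIoi]; ring

end Aux

/-- For the normalized exponential wavefunction `Ψ_E(x) = e^{-|x|}` on `ℝ`
(with density `e^{-2|x|}`), the product `N_2(E)·N_2(Ẽ)` equals `8π/5`, strictly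
below the Gaussian value `2π`. Here `Ψ̂_E` is the symmetric-convention Fourier
transform and `N_2` of a density `f` is `(∫ f²)⁻¹`. -/
theorem exponential_state_below_gaussian (Ψ : ℝ → ℝ)
    (hΨ : Ψ = fun x => Real.exp (-|x|))
    (F : ℝ → ℂ)
    (hF : F = fun (ξ : ℝ) => ((Real.sqrt (2 * Real.pi) : ℝ) : ℂ)⁻¹ *
      ∫ x : ℝ, Complex.exp (-(Complex.I * (x : ℂ) * (ξ : ℂ))) * (Ψ x : ℂ)) :
    (∫ x : ℝ, (Ψ x ^ 2) ^ 2)⁻¹ * (∫ ξ : ℝ, (‖F ξ‖ ^ 2) ^ 2)⁻¹ = 8 * Real.pi / 5 ∧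
    8 * Real.pi / 5 < 2 * Real.pi := by
  constructor
  · have hπ : (0:ℝ) < Real.pi := Real.pi_pos
    have h1 : ∫ x : ℝ, (Ψ x ^ 2) ^ 2 = 1/2 := by
      rw [hΨ, ← integral_exp_neg_four_abs]
      congr 1
      ext x
      rw [← Real.exp_nat_mul, ← Real.exp_nat_mul]
      norm_num
      ring_nf
    have key : ∀ ξ : ℝ, (‖F ξ‖ ^ 2) ^ 2 = 4/Real.pi^2 * ((1+ξ^2)^4)⁻¹ := by
      intro ξ
      rw [hF, hΨ]
      simp only
      rw [fourier_val ξ, norm_mul, norm_inv, Complex.norm_real, Complex.norm_real,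
        Real.norm_eq_abs, Real.norm_eq_abs, abs_of_nonneg (Real.sqrt_nonneg _), abs_of_nonneg (by positivity)]
      have h2π : Real.sqrt (2*Real.pi)^2 = 2*Real.pi := Real.sq_sqrt (by positivity)
      have hs : (0:ℝ) < Real.sqrt (2*Real.pi) := Real.sqrt_pos.mpr (by positivity)
      have hξ : (0:ℝ) < 1 + ξ^2 := by positivity
      field_simp
      rw [show Real.sqrt (2*Real.pi)^4 = (Real.sqrt (2*Real.pi)^2)^2 by ring, h2π]
      ring
    have h2 : ∫ ξ : ℝ, (‖F ξ‖ ^ 2) ^ 2 = 5/(4*Real.pi) := by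
      simp_rw [key]
      rw [integral_const_mul, integral_inv_pow4]
      field_simp
      ring
    rw [h1, h2]
    field_simp
    ring
  · nlinarith [Real.pi_pos]
end
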